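/- arXiv:1206.5437 — 5 statements merged into one kernel-verified Lean document; each statement's English description precedes it below -/
import Mathlib

section
/- For any two integer partitions λ and μ, if the content polynomials C_λ(q) and C_μ(q) are equal as Laurent polynomials in ℤ[q, q⁻¹], then λ = μ. Equivalently, for every integer d the number of boxes of content d in the Young diagram of λ equals the number of boxes of content d in the Young diagram of μ only if the two Young diagrams coincide, so a partition can be reconstructed from its content polynomial. -/
/-- A partition: a finite non-increasing list of positive integers. -/
structure YPartition where
  parts : List ℕ
  pos : ∀ p ∈ parts, 0 < p
  sorted : parts.Pairwise (· ≥ ·)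

/-- The content polynomial `C_λ(q) = Σ_{(i,j) ∈ Y(λ)} q^(j-i)` as a Laurent polynomial
in `ℤ[q, q⁻¹]`.  Rows and columns are indexed from `0`; the box in (0-indexed) row `i`
and column `j` has content `j - i`. -/
noncomputable def contentPoly (lam : YPartition) : LaurentPolynomial ℤ :=
  ∑ i ∈ Finset.range lam.parts.length, ∑ j ∈ Finset.range (lam.parts.getD i 0),
    LaurentPolynomial.T ((j : ℤ) - (i : ℤ))


/-- Number of boxes of content `d` in the diagram of the list `l`. -/
def boxCount (l : List ℕ) (d : ℤ) : ℕ :=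
  ∑ i ∈ Finset.range l.length, ∑ j ∈ Finset.range (l.getD i 0),
    if (j : ℤ) - (i : ℤ) = d then 1 else 0

lemma boxCount_nil (d : ℤ) : boxCount [] d = 0 := by simp [boxCount]

lemma row_sum (p : ℕ) (d : ℤ) :
    (∑ j ∈ Finset.range p, if (j : ℤ) = d then (1:ℕ) else 0)
      = if 0 ≤ d ∧ d < p then 1 else 0 := by
  by_cases hd : 0 ≤ d ∧ d < p
  · obtain ⟨h0, hp⟩ := hd
    have hdn : d = (d.toNat : ℤ) := (Int.toNat_of_nonneg h0).symm
    have hmem : d.toNat ∈ Finset.range p := by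
      rw [Finset.mem_range]; omega
    rw [if_pos ⟨h0, hp⟩]
    rw [Finset.sum_eq_single d.toNat]
    · simp [← hdn]
    · intro b _ hb
      have : (b : ℤ) ≠ d := by omega
      simp [this]
    · intro hc; exact absurd hmem hc
  · rw [if_neg hd]
    apply Finset.sum_eq_zero
    intro j hj
    rw [Finset.mem_range] at hj
    have : (j : ℤ) ≠ d := by omega
    simp [this]

lemma boxCount_cons (p : ℕ) (t : List ℕ) (d : ℤ) :
    boxCount (p :: t) d = (if 0 ≤ d ∧ d < p then 1 else 0) + boxCount t (d + 1) := by
  unfold boxCount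
  rw [List.length_cons, Finset.sum_range_succ']
  simp only [List.getD_cons_succ, List.getD_cons_zero, Nat.cast_zero, sub_zero,
    Nat.cast_add, Nat.cast_one]
  rw [row_sum, add_comm]
  congr 1
  apply Finset.sum_congr rfl
  intro i _
  apply Finset.sum_congr rfl
  intro j _
  have he : ((j:ℤ) - (↑i + 1) = d) ↔ ((j:ℤ) - ↑i = d + 1) := by omega
  simp only [he]

/-- if every part is `≤ c` and `c ≤ d`, there are no boxes of content `d`. -/
lemma boxCount_eq_zero (l : List ℕ) (c : ℕ) (hc : ∀ x ∈ l, x ≤ c) (d : ℤ) (hd : (c : ℤ) ≤ d) :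
    boxCount l d = 0 := by
  apply Finset.sum_eq_zero
  intro i hi
  apply Finset.sum_eq_zero
  intro j hj
  rw [Finset.mem_range] at hi hj
  have : l.getD i 0 ≤ c := by rw [List.getD_eq_getElem _ _ hi]; exact hc _ (List.getElem_mem hi)
  have : (j : ℤ) - i ≠ d := by omega
  simp [this]

lemma boxCount_head_pos (p : ℕ) (t : List ℕ) (hp : 0 < p) :
    0 < boxCount (p :: t) ((p : ℤ) - 1) := by
  rw [boxCount_cons]
  have : 0 ≤ (p:ℤ) - 1 ∧ (p:ℤ) - 1 < p := by omega
  rw [if_pos this]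
  omega

lemma boxCount_inj (l : List ℕ) : ∀ (m : List ℕ),
    (∀ x ∈ l, 0 < x) → (∀ x ∈ m, 0 < x) →
    l.Pairwise (· ≥ ·) → m.Pairwise (· ≥ ·) →
    (∀ d, boxCount l d = boxCount m d) → l = m := by
  induction l with
  | nil =>
    intro m _ hmp _ _ h
    cases m with
    | nil => rfl
    | cons q t =>
      have := boxCount_head_pos q t (hmp q (by simp))
      rw [← h, boxCount_nil] at this
      omega
  | cons p lt ih =>
    intro m hlp hmp hls hms h
    cases m with
    | nil =>
      have := boxCount_head_pos p lt (hlp p (by simp))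
      rw [h, boxCount_nil] at this
      omega
    | cons q mt =>
      have hp : 0 < p := hlp p (by simp)
      have hq : 0 < q := hmp q (by simp)
      -- p = q
      have hbl : ∀ x ∈ p :: lt, x ≤ p := by
        intro x hx
        rcases List.mem_cons.mp hx with h1 | h1
        · omega
        · exact (List.rel_of_pairwise_cons hls h1)
      have hbm : ∀ x ∈ q :: mt, x ≤ q := by
        intro x hx
        rcases List.mem_cons.mp hx with h1 | h1
        · omega
        · exact (List.rel_of_pairwise_cons hms h1)
      have hpq : p = q := by
        by_contra hne
        rcases Nat.lt_or_ge p q with hlt | hge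
        · have h1 := boxCount_head_pos q mt hq
          have h2 := boxCount_eq_zero (p :: lt) p hbl ((q:ℤ)-1) (by omega)
          rw [← h, h2] at h1; omega
        · have hgt : q < p := by omega
          have h1 := boxCount_head_pos p lt hp
          have h2 := boxCount_eq_zero (q :: mt) q hbm ((p:ℤ)-1) (by omega)
          rw [h, h2] at h1; omega
      subst hpq
      have htail : ∀ d, boxCount lt d = boxCount mt d := by
        intro d
        have := h (d - 1)
        rw [boxCount_cons, boxCount_cons] at this
        simp only [sub_add_cancel] at this
        omega
      have : lt = mt := by
        apply ih mt
        · intro x hx; exact hlp x (by simp [hx])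
        · intro x hx; exact hmp x (by simp [hx])
        · exact hls.of_cons
        · exact hms.of_cons
        · exact htail
      rw [this]

noncomputable def contentPoly' (lam : List ℕ) : LaurentPolynomial ℤ :=
  ∑ i ∈ Finset.range lam.length, ∑ j ∈ Finset.range (lam.getD i 0),
    LaurentPolynomial.T ((j : ℤ) - (i : ℤ))

lemma contentPoly_apply (l : List ℕ) (d : ℤ) :
    (contentPoly' l).coeff d = (boxCount l d : ℤ) := by
  unfold contentPoly' boxCount
  rw [AddMonoidAlgebra.coeff_sum, Finsupp.finset_sum_apply]
  push_cast
  apply Finset.sum_congr rfl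
  intro i _
  rw [AddMonoidAlgebra.coeff_sum, Finsupp.finset_sum_apply]
  apply Finset.sum_congr rfl
  intro j _
  rw [LaurentPolynomial.T_apply]


/-- A partition is uniquely determined by its content polynomial: if
`C_λ(q) = C_μ(q)` in `ℤ[q, q⁻¹]` then `λ = μ`. -/
theorem contentPoly_injective (lam mu : YPartition)
    (h : contentPoly lam = contentPoly mu) : lam = mu := by
  have hc : contentPoly lam = contentPoly' lam.parts := rfl
  have hc' : contentPoly mu = contentPoly' mu.parts := rfl
  have hbc : ∀ d, boxCount lam.parts d = boxCount mu.parts d := by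
    intro d
    have : (contentPoly' lam.parts).coeff d = (contentPoly' mu.parts).coeff d := by
      rw [← hc, ← hc', h]
    rw [contentPoly_apply, contentPoly_apply] at this
    exact_mod_cast this
  have hparts : lam.parts = mu.parts :=
    boxCount_inj lam.parts mu.parts lam.pos mu.pos lam.sorted mu.sorted hbc
  cases lam; cases mu
  simp_all
end

section
/- Let ℚ(s) be the field of rational functions in one variable s over ℚ and set z = s − s⁻¹. The map sending a partition λ to the element z · C_λ(s²) + z⁻¹ of ℚ(s) is injective on the set of all partitions (including the empty partition, which is sent to z⁻¹). -/
/-- The evaluation `C_λ(s²) = Σ_{(i,j) ∈ Y(λ)} s^(2(j-i))` of the content polynomial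
at `q = s²` inside the rational function field `ℚ(s)`.  Rows and columns are indexed
from `0`; the box in (0-indexed) row `i` and column `j` has content `j - i`. -/
noncomputable def contentEval (lam : YPartition) : RatFunc ℚ :=
  ∑ i ∈ Finset.range lam.parts.length, ∑ j ∈ Finset.range (lam.parts.getD i 0),
    (RatFunc.X : RatFunc ℚ) ^ (2 * ((j : ℤ) - (i : ℤ)))

open Finset Polynomial

/-- padded parts are antitone -/
lemma YPartition.getD_le (lam : YPartition) {a b : ℕ} (hab : a ≤ b) :
    lam.parts.getD b 0 ≤ lam.parts.getD a 0 := by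
  by_cases hb : b < lam.parts.length
  · have ha : a < lam.parts.length := lt_of_le_of_lt hab hb
    rw [List.getD_eq_getElem _ _ ha, List.getD_eq_getElem _ _ hb]
    exact lam.sorted.rel_get_of_le (show (⟨a, ha⟩ : Fin _) ≤ ⟨b, hb⟩ from hab)
  · rw [List.getD_eq_default _ _ (not_lt.mp hb)]
    exact Nat.zero_le _

/-- The associated polynomial after clearing denominators with `X^(2L)`. -/
noncomputable def shiftedPoly (lam : YPartition) (L : ℕ) : Polynomial ℚ :=
  ∑ i ∈ Finset.range lam.parts.length, ∑ j ∈ Finset.range (lam.parts.getD i 0),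
    (Polynomial.X : Polynomial ℚ) ^ (2 * (j + (L - i)))

lemma contentEval_mul_X_pow (lam : YPartition) (L : ℕ) (hL : lam.parts.length ≤ L) :
    contentEval lam * RatFunc.X ^ (2 * L) =
      algebraMap (Polynomial ℚ) (RatFunc ℚ) (shiftedPoly lam L) := by
  have hXne : (RatFunc.X : RatFunc ℚ) ≠ 0 := RatFunc.X_ne_zero
  rw [contentEval, shiftedPoly, map_sum, Finset.sum_mul]
  refine Finset.sum_congr rfl fun i hi => ?_
  rw [map_sum, Finset.sum_mul]
  refine Finset.sum_congr rfl fun j hj => ?_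
  have hi' : i ≤ L := le_trans (le_of_lt (Finset.mem_range.mp hi)) hL
  rw [map_pow, RatFunc.algebraMap_X, ← zpow_natCast (RatFunc.X : RatFunc ℚ) (2 * L),
    ← zpow_natCast (RatFunc.X : RatFunc ℚ) (2 * (j + (L - i))), ← zpow_add₀ hXne]
  congr 1
  have : ((L - i : ℕ) : ℤ) = (L : ℤ) - (i : ℤ) := by
    omega
  push_cast [this]
  ring

/-- box count with given shifted exponent -/
def boxCnt (lam : YPartition) (L n : ℕ) : ℕ :=
  ∑ i ∈ Finset.range lam.parts.length, ∑ j ∈ Finset.range (lam.parts.getD i 0),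
    if n = 2 * (j + (L - i)) then 1 else 0

lemma coeff_shiftedPoly (lam : YPartition) (L n : ℕ) :
    (shiftedPoly lam L).coeff n = (boxCnt lam L n : ℚ) := by
  rw [shiftedPoly, boxCnt, Polynomial.finset_sum_coeff]
  push_cast
  refine Finset.sum_congr rfl fun i _ => ?_
  rw [Polynomial.finset_sum_coeff]
  refine Finset.sum_congr rfl fun j _ => ?_
  simp [Polynomial.coeff_X_pow]

/-- the row-count form of the box count -/
lemma boxCnt_eq (lam : YPartition) (L : ℕ) (hL : lam.parts.length ≤ L) (i k : ℕ) (hi : i < L) :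
    boxCnt lam L (2 * (k + (L - i))) =
      ∑ i' ∈ Finset.range L,
        if i ≤ k + i' ∧ k + i' < lam.parts.getD i' 0 + i then 1 else 0 := by
  rw [boxCnt]
  rw [Finset.sum_subset (Finset.range_subset_range.mpr hL)
    (by
      intro i' _ hi'
      have h0 : lam.parts.getD i' 0 = 0 :=
        List.getD_eq_default _ _ (le_of_not_gt (fun h => hi' (Finset.mem_range.mpr h)))
      rw [h0]
      simp)]
  refine Finset.sum_congr rfl fun i' hi' => ?_
  have hi'L : i' < L := Finset.mem_range.mp hi'
  by_cases hk : i ≤ k + i'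
  · have hcong : ∀ j ∈ Finset.range (lam.parts.getD i' 0),
        (if 2 * (k + (L - i)) = 2 * (j + (L - i')) then (1:ℕ) else 0) =
        (if j = k + i' - i then 1 else 0) := by
      intro j _
      refine if_congr ?_ rfl rfl
      omega
    rw [Finset.sum_congr rfl hcong, Finset.sum_ite_eq' (Finset.range _) (k + i' - i) (fun _ => 1)]
    simp only [Finset.mem_range]
    split <;> split <;> first | rfl | omega
  · rw [Finset.sum_eq_zero, if_neg (by omega)]
    intro j _
    rw [if_neg (by omega)]

/-- counting rows with large enough content-shifted entries -/
lemma row_lt_iff (lam : YPartition) (L : ℕ) (hL : lam.parts.length ≤ L) (i k : ℕ) (hi : i < L) :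
    k < lam.parts.getD i 0 ↔
      i < ((Finset.range L).filter (fun i' => k + i' < lam.parts.getD i' 0 + i)).card := by
  constructor
  · intro hk
    have hsub : Finset.range (i + 1) ⊆
        (Finset.range L).filter (fun i' => k + i' < lam.parts.getD i' 0 + i) := by
      intro i' hi'
      have hi'i : i' ≤ i := by simpa [Nat.lt_succ_iff] using hi'
      refine Finset.mem_filter.mpr ⟨Finset.mem_range.mpr (lt_of_le_of_lt hi'i hi), ?_⟩
      have := lam.getD_le hi'i
      omega
    have h2 := Finset.card_le_card hsub
    rw [Finset.card_range] at h2
    omega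
  · intro hcard
    by_contra hk
    push_neg at hk
    have hsub : ((Finset.range L).filter (fun i' => k + i' < lam.parts.getD i' 0 + i)) ⊆
        Finset.range i := by
      intro i' hi'
      rcases Finset.mem_filter.mp hi' with ⟨-, h2⟩
      refine Finset.mem_range.mpr ?_
      by_contra hii
      push_neg at hii
      have := lam.getD_le hii
      omega
    have := Finset.card_le_card hsub
    simp only [Finset.card_range] at this
    omega

lemma length_le_of_getD_eq (lam1 lam2 : YPartition)
    (hq : ∀ i, lam1.parts.getD i 0 = lam2.parts.getD i 0) :
    lam1.parts.length ≤ lam2.parts.length := by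
  by_contra h
  push_neg at h
  have h1 : 0 < lam1.parts.getD lam2.parts.length 0 := by
    rw [List.getD_eq_getElem _ _ h]
    exact lam1.pos _ (List.getElem_mem _)
  have h2 : lam2.parts.getD lam2.parts.length 0 = 0 := List.getD_eq_default _ _ le_rfl
  rw [hq] at h1
  omega

/-- With `z = s - s⁻¹ ∈ ℚ(s)`, the map `λ ↦ z · C_λ(s²) + z⁻¹` is injective on
partitions (the empty partition is sent to `z⁻¹`). -/
theorem injective_z_contentEval_add_zinv :
    Function.Injective (fun lam : YPartition =>
      (RatFunc.X - RatFunc.X⁻¹) * contentEval lam + (RatFunc.X - RatFunc.X⁻¹)⁻¹) := by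
  intro lam1 lam2 h
  simp only at h
  have hXne : (RatFunc.X : RatFunc ℚ) ≠ 0 := RatFunc.X_ne_zero
  have hz : (RatFunc.X - RatFunc.X⁻¹ : RatFunc ℚ) ≠ 0 := by
    intro h0
    have hx : (RatFunc.X : RatFunc ℚ) = RatFunc.X⁻¹ := sub_eq_zero.mp h0
    have hxx : (RatFunc.X : RatFunc ℚ) * RatFunc.X = 1 := by
      rw (occs := .pos [2]) [hx]
      exact mul_inv_cancel₀ hXne
    have h2 : (Polynomial.X * Polynomial.X : Polynomial ℚ) = 1 := by
      apply RatFunc.algebraMap_injective ℚ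
      rw [map_mul, map_one, RatFunc.algebraMap_X]
      exact hxx
    have := congrArg (fun p => Polynomial.coeff p 0) h2
    simp [Polynomial.coeff_X_mul] at this
  have hC : contentEval lam1 = contentEval lam2 :=
    mul_left_cancel₀ hz (add_right_cancel h)
  set L := max lam1.parts.length lam2.parts.length with hLdef
  have hL1 : lam1.parts.length ≤ L := le_max_left _ _
  have hL2 : lam2.parts.length ≤ L := le_max_right _ _
  have hP : shiftedPoly lam1 L = shiftedPoly lam2 L := by
    apply RatFunc.algebraMap_injective ℚ
    rw [← contentEval_mul_X_pow lam1 L hL1, ← contentEval_mul_X_pow lam2 L hL2, hC]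
  have hcnt : ∀ n, boxCnt lam1 L n = boxCnt lam2 L n := by
    intro n
    have := congrArg (fun p => Polynomial.coeff p n) hP
    simp only [coeff_shiftedPoly] at this
    exact_mod_cast this
  -- row sums equality
  have hrow : ∀ i < L, ∀ k,
      (∑ i' ∈ Finset.range L, if i ≤ k + i' ∧ k + i' < lam1.parts.getD i' 0 + i then 1 else 0) =
      (∑ i' ∈ Finset.range L, if i ≤ k + i' ∧ k + i' < lam2.parts.getD i' 0 + i then 1 else 0) := by
    intro i hi k
    rw [← boxCnt_eq lam1 L hL1 i k hi, ← boxCnt_eq lam2 L hL2 i k hi, hcnt]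
  -- filter-card equality (dropping the lower bound condition)
  have hG : ∀ i < L, ∀ k,
      ((Finset.range L).filter (fun i' => k + i' < lam1.parts.getD i' 0 + i)).card =
      ((Finset.range L).filter (fun i' => k + i' < lam2.parts.getD i' 0 + i)).card := by
    intro i hi k
    have key : ∀ lam : YPartition,
        ((Finset.range L).filter (fun i' => k + i' < lam.parts.getD i' 0 + i)).card =
        (∑ i' ∈ Finset.range L, if i ≤ k + i' ∧ k + i' < lam.parts.getD i' 0 + i then 1 else 0)
          + (∑ i' ∈ Finset.range L, if k + i' < i then 1 else 0) := by
      intro lam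
      rw [Finset.card_filter, ← Finset.sum_add_distrib]
      refine Finset.sum_congr rfl fun i' _ => ?_
      have hnn : (0:ℕ) ≤ lam.parts.getD i' 0 := Nat.zero_le _
      split_ifs <;> omega
    rw [key lam1, key lam2, hrow i hi k]
  -- entrywise equality of padded parts
  have hq : ∀ i, lam1.parts.getD i 0 = lam2.parts.getD i 0 := by
    intro i
    by_cases hi : i < L
    · have hiff : ∀ k, k < lam1.parts.getD i 0 ↔ k < lam2.parts.getD i 0 := by
        intro k
        rw [row_lt_iff lam1 L hL1 i k hi, row_lt_iff lam2 L hL2 i k hi, hG i hi k]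
      rcases Nat.lt_trichotomy (lam1.parts.getD i 0) (lam2.parts.getD i 0) with hlt | heq | hgt
      · exact absurd ((hiff _).mpr hlt) (lt_irrefl _)
      · exact heq
      · exact absurd ((hiff _).mp hgt) (lt_irrefl _)
    · push_neg at hi
      rw [List.getD_eq_default _ _ (le_trans hL1 hi), List.getD_eq_default _ _ (le_trans hL2 hi)]
  have hlen : lam1.parts.length = lam2.parts.length :=
    le_antisymm (length_le_of_getD_eq lam1 lam2 hq)
      (length_le_of_getD_eq lam2 lam1 (fun i => (hq i).symm))
  have hparts : lam1.parts = lam2.parts := by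
    apply List.ext_getElem hlen
    intro i h1 h2
    have := hq i
    rwa [List.getD_eq_getElem _ _ h1, List.getD_eq_getElem _ _ h2] at this
  cases lam1; cases lam2
  cases hparts
  rfl
end

section
/- Let ℚ(s) be the field of rational functions in s over ℚ and z = s − s⁻¹. Let λ₀, λ₁, …, λ_{n−1} be pairwise distinct partitions and set b_j = z · C_{λ_j}(s²) + z⁻¹ ∈ ℚ(s). Then the n × n matrix B over ℚ(s) with entries B_{k,j} = (b_j)^k for 0 ≤ k, j ≤ n − 1 is nonsingular (its determinant is nonzero). -/
namespace VandermondeAux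

lemma hx0 : (RatFunc.X : RatFunc ℚ) ≠ 0 := RatFunc.X_ne_zero

lemma z_ne_zero : (RatFunc.X - RatFunc.X⁻¹ : RatFunc ℚ) ≠ 0 := by
  intro h
  have h2 : (RatFunc.X : RatFunc ℚ) * (RatFunc.X - RatFunc.X⁻¹) = RatFunc.X ^ 2 - 1 := by
    rw [mul_sub, mul_inv_cancel₀ hx0, sq]
  rw [h, mul_zero] at h2
  have h3 : (Polynomial.X : Polynomial ℚ) ^ 2 - 1 = 0 := by
    apply RatFunc.algebraMap_injective ℚ
    rw [map_sub, map_pow, map_one, RatFunc.algebraMap_X, map_zero]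
    exact h2.symm
  have := congrArg (fun p => Polynomial.coeff p 2) h3
  simp [Polynomial.coeff_X_pow, Polynomial.coeff_one] at this

lemma getD_anti (lam : YPartition) {i j : ℕ} (hij : i ≤ j) :
    lam.parts.getD j 0 ≤ lam.parts.getD i 0 := by
  rcases Nat.lt_or_ge j lam.parts.length with hj | hj
  · have hi : i < lam.parts.length := lt_of_le_of_lt hij hj
    rw [List.getD_eq_getElem _ _ hj, List.getD_eq_getElem _ _ hi]
    rcases hij.lt_or_eq with hlt | rfl
    · exact (List.pairwise_iff_getElem.mp lam.sorted) i j hi hj hlt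
    · exact le_refl _
  · rw [List.getD_eq_default _ _ hj]
    exact Nat.zero_le _

lemma key (lam : YPartition) (N : ℕ) (hN : lam.parts.length ≤ N) :
    ((RatFunc.X : RatFunc ℚ) ^ 2 - 1) * contentEval lam
      = ∑ i ∈ Finset.range N,
          ((RatFunc.X : RatFunc ℚ) ^ (2 * ((lam.parts.getD i 0 : ℤ) - i))
            - (RatFunc.X : RatFunc ℚ) ^ (-(2 * (i : ℤ)))) := by
  have hext : contentEval lam = ∑ i ∈ Finset.range N,
      ∑ j ∈ Finset.range (lam.parts.getD i 0),
        (RatFunc.X : RatFunc ℚ) ^ (2 * ((j : ℤ) - (i : ℤ))) := by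
    unfold contentEval
    apply Finset.sum_subset (Finset.range_subset_range.2 hN)
    intro i _ hi
    have : lam.parts.length ≤ i := by simpa using hi
    rw [List.getD_eq_default _ _ this]
    simp
  rw [hext, Finset.mul_sum]
  apply Finset.sum_congr rfl
  intro i _
  set x := (RatFunc.X : RatFunc ℚ)
  set m := lam.parts.getD i 0 with hm
  have step1 : ∀ j : ℕ, x ^ (2 * ((j : ℤ) - (i : ℤ))) = (x ^ 2) ^ j * x ^ (-(2 * (i : ℤ))) := by
    intro j
    rw [← pow_mul, ← zpow_natCast x (2 * j), ← zpow_add₀ hx0]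
    congr 1; push_cast; ring
  simp_rw [step1, ← Finset.sum_mul, ← mul_assoc, mul_comm (x ^ 2 - 1), geom_sum_mul, sub_mul,
    one_mul]

lemma sum_X_pow_inj {N : ℕ} (e f : Fin N → ℕ) (he : StrictMono e) (hf : StrictMono f)
    (h : ∑ i, (Polynomial.X : Polynomial ℚ) ^ e i
          = ∑ i, (Polynomial.X : Polynomial ℚ) ^ f i) : e = f := by
  set S : Finset ℕ := Finset.univ.image e with hS
  set T : Finset ℕ := Finset.univ.image f with hT
  have hSsum : ∑ i, (Polynomial.X : Polynomial ℚ) ^ e i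
      = ∑ k ∈ S, (Polynomial.X : Polynomial ℚ) ^ k :=
    (Finset.sum_image (fun a _ b _ hab => he.injective hab)).symm
  have hTsum : ∑ i, (Polynomial.X : Polynomial ℚ) ^ f i
      = ∑ k ∈ T, (Polynomial.X : Polynomial ℚ) ^ k :=
    (Finset.sum_image (fun a _ b _ hab => hf.injective hab)).symm
  have hST : S = T := by
    ext m
    have := congrArg (fun p => Polynomial.coeff p m) (hSsum.symm.trans (h.trans hTsum))
    simp only [Polynomial.finset_sum_coeff, Polynomial.coeff_X_pow] at this
    rw [Finset.sum_ite_eq S m (fun _ => (1:ℚ)), Finset.sum_ite_eq T m (fun _ => (1:ℚ))] at this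
    by_cases hm : m ∈ S <;> by_cases hm' : m ∈ T <;> simp [hm, hm'] at this ⊢
  have hcard : S.card = N := by
    rw [hS, Finset.card_image_of_injective _ he.injective, Finset.card_univ, Fintype.card_fin]
  have h1 : e = S.orderEmbOfFin hcard :=
    Finset.orderEmbOfFin_unique hcard (fun x => Finset.mem_image_of_mem _ (Finset.mem_univ x)) he
  have h2 : f = S.orderEmbOfFin hcard :=
    Finset.orderEmbOfFin_unique hcard
      (fun x => hST ▸ Finset.mem_image_of_mem _ (Finset.mem_univ x)) hf
  rw [h1, h2]

lemma contentEval_injective : Function.Injective contentEval := by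
  intro lam mu h
  set N := max lam.parts.length mu.parts.length with hNdef
  have hNl : lam.parts.length ≤ N := le_max_left _ _
  have hNm : mu.parts.length ≤ N := le_max_right _ _
  set x := (RatFunc.X : RatFunc ℚ) with hxdef
  have hkey : ∑ i ∈ Finset.range N, x ^ (2 * ((lam.parts.getD i 0 : ℤ) - i))
      = ∑ i ∈ Finset.range N, x ^ (2 * ((mu.parts.getD i 0 : ℤ) - i)) := by
    have h3 : (x ^ 2 - 1) * contentEval lam = (x ^ 2 - 1) * contentEval mu := by rw [h]
    rw [key lam N hNl, key mu N hNm, Finset.sum_sub_distrib, Finset.sum_sub_distrib] at h3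
    exact sub_left_inj.mp h3
  set E : YPartition → ℕ → ℕ := fun p i => 2 * (p.parts.getD i 0 + N - i) with hE
  have hcast : ∀ (p : YPartition) (i : ℕ), i < N →
      ((E p i : ℤ)) = 2 * ((p.parts.getD i 0 : ℤ) - i) + 2 * N := by
    intro p i hi
    simp only [hE]
    have hle : i ≤ p.parts.getD i 0 + N := le_trans hi.le (Nat.le_add_left _ _)
    rw [Nat.cast_mul, Nat.cast_sub hle]
    push_cast; ring
  have hstep : ∀ (p : YPartition) (i : ℕ), i < N →
      x ^ (2 * ((p.parts.getD i 0 : ℤ) - i)) * x ^ ((2 * N : ℕ) : ℤ) = x ^ (E p i) := by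
    intro p i hi
    rw [← zpow_add₀ hx0, ← zpow_natCast x (E p i)]
    congr 1
    rw [hcast p i hi]
    push_cast; ring
  have hmul : ∑ i ∈ Finset.range N, x ^ (E lam i) = ∑ i ∈ Finset.range N, x ^ (E mu i) := by
    have h4 := congrArg (fun t => t * x ^ ((2 * N : ℕ) : ℤ)) hkey
    simp only [Finset.sum_mul] at h4
    calc ∑ i ∈ Finset.range N, x ^ (E lam i)
        = ∑ i ∈ Finset.range N, x ^ (2 * ((lam.parts.getD i 0 : ℤ) - i)) * x ^ ((2 * N : ℕ) : ℤ) :=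
          (Finset.sum_congr rfl fun i hi => (hstep lam i (Finset.mem_range.mp hi))).symm
      _ = ∑ i ∈ Finset.range N, x ^ (2 * ((mu.parts.getD i 0 : ℤ) - i)) * x ^ ((2 * N : ℕ) : ℤ) :=
          h4
      _ = ∑ i ∈ Finset.range N, x ^ (E mu i) :=
          Finset.sum_congr rfl fun i hi => hstep mu i (Finset.mem_range.mp hi)
  have hpoly : ∑ i ∈ Finset.range N, (Polynomial.X : Polynomial ℚ) ^ (E lam i)
      = ∑ i ∈ Finset.range N, (Polynomial.X : Polynomial ℚ) ^ (E mu i) := by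
    apply RatFunc.algebraMap_injective ℚ
    rw [map_sum, map_sum]
    simpa only [map_pow, RatFunc.algebraMap_X] using hmul
  have hanti : ∀ (p : YPartition) (i j : ℕ), i < j → j < N → E p j < E p i := by
    intro p i j hij hj
    have hg := getD_anti p hij.le
    simp only [hE]
    omega
  set e1 : Fin N → ℕ := fun i => E lam (i.rev : Fin N) with he1def
  set e2 : Fin N → ℕ := fun i => E mu (i.rev : Fin N) with he2def
  have he1 : StrictMono e1 := fun i j hij =>
    hanti lam _ _ (Fin.rev_lt_rev.mpr hij) (Fin.is_lt _)
  have he2 : StrictMono e2 := fun i j hij =>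
    hanti mu _ _ (Fin.rev_lt_rev.mpr hij) (Fin.is_lt _)
  have hsums : ∑ i, (Polynomial.X : Polynomial ℚ) ^ e1 i
      = ∑ i, (Polynomial.X : Polynomial ℚ) ^ e2 i := by
    have r1 : ∑ i : Fin N, (Polynomial.X : Polynomial ℚ) ^ e1 i
        = ∑ i : Fin N, (Polynomial.X : Polynomial ℚ) ^ (E lam i) :=
      Fintype.sum_equiv Fin.revPerm _ _ (fun i => rfl)
    have r2 : ∑ i : Fin N, (Polynomial.X : Polynomial ℚ) ^ e2 i
        = ∑ i : Fin N, (Polynomial.X : Polynomial ℚ) ^ (E mu i) :=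
      Fintype.sum_equiv Fin.revPerm _ _ (fun i => rfl)
    rw [Finset.sum_range, Finset.sum_range] at hpoly
    rw [r1, r2]
    exact hpoly
  have he12 : e1 = e2 := sum_X_pow_inj e1 e2 he1 he2 hsums
  have hgetD : ∀ i : ℕ, lam.parts.getD i 0 = mu.parts.getD i 0 := by
    intro i
    rcases Nat.lt_or_ge i N with hi | hi
    · have := congrFun he12 ((⟨i, hi⟩ : Fin N).rev)
      simp only [he1def, he2def, Fin.rev_rev] at this
      simp only [hE] at this
      omega
    · rw [List.getD_eq_default _ _ (le_trans hNl hi), List.getD_eq_default _ _ (le_trans hNm hi)]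
  have hlen : ∀ p q : YPartition, (∀ i, p.parts.getD i 0 = q.parts.getD i 0) →
      p.parts.length ≤ q.parts.length := by
    intro p q hpq
    by_contra hlt
    push_neg at hlt
    have h1 : p.parts.getD q.parts.length 0 = p.parts[q.parts.length] :=
      List.getD_eq_getElem _ _ hlt
    have hpos := p.pos _ (List.getElem_mem hlt)
    have h2 : q.parts.getD q.parts.length 0 = 0 := List.getD_eq_default _ _ le_rfl
    have := hpq q.parts.length
    omega
  have hlen' : lam.parts.length = mu.parts.length :=
    le_antisymm (hlen lam mu hgetD) (hlen mu lam (fun i => (hgetD i).symm))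
  have hparts : lam.parts = mu.parts := by
    apply List.ext_getElem hlen'
    intro i h1 h2
    have := hgetD i
    rwa [List.getD_eq_getElem _ _ h1, List.getD_eq_getElem _ _ h2] at this
  cases lam; cases mu
  simp only at hparts
  subst hparts
  rfl

end VandermondeAux

/-- Given pairwise distinct partitions `λ_0, …, λ_{n-1}` and
`b_j = z · C_{λ_j}(s²) + z⁻¹ ∈ ℚ(s)` with `z = s - s⁻¹`, the `n × n` Vandermonde-type
matrix with entries `B_{k,j} = (b_j)^k` is nonsingular. -/
theorem vandermonde_contentEval_det_ne_zero (n : ℕ) (lam : Fin n → YPartition)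
    (hlam : Function.Injective lam) :
    (Matrix.of fun k j : Fin n =>
        ((RatFunc.X - RatFunc.X⁻¹) * contentEval (lam j) +
          (RatFunc.X - RatFunc.X⁻¹)⁻¹) ^ (k : ℕ)).det ≠ 0 := by
  set z := (RatFunc.X - RatFunc.X⁻¹ : RatFunc ℚ) with hz
  set b : Fin n → RatFunc ℚ := fun j => z * contentEval (lam j) + z⁻¹ with hb
  have hbinj : Function.Injective b := by
    intro i j hij
    apply hlam
    apply VandermondeAux.contentEval_injective
    have h1 : z * contentEval (lam i) = z * contentEval (lam j) := by
      simpa only [hb, add_left_inj] using hij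
    exact mul_left_cancel₀ VandermondeAux.z_ne_zero h1
  have hM : (Matrix.of fun k j : Fin n =>
      ((RatFunc.X - RatFunc.X⁻¹) * contentEval (lam j) +
        (RatFunc.X - RatFunc.X⁻¹)⁻¹) ^ (k : ℕ)) = (Matrix.vandermonde b).transpose := rfl
  rw [hM, Matrix.det_transpose]
  exact Matrix.det_vandermonde_ne_zero_iff.mpr hbinj
end

section
/- Let ℚ(s) be the field of rational functions in s over ℚ and z = s − s⁻¹. Suppose w is a finitely supported function from ordered pairs of partitions to ℚ(s), r ∈ ℚ(s), and for all integers k, l ≥ 0 the equality Σ_{(λ,μ)} w(λ, μ) · (z C_λ(s²) + z⁻¹)^k · (z C_μ(s²) + z⁻¹)^l = z^{−k−l} · r holds. Then w(∅, ∅) = r and w(λ, μ) = 0 whenever (λ, μ) ≠ (∅, ∅). -/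
/-- The empty partition. -/
def YPartition.empty : YPartition := ⟨[], by simp, List.Pairwise.nil⟩

/-- `z = s - s⁻¹` in `ℚ(s)`. -/
noncomputable def zRF : RatFunc ℚ := RatFunc.X - RatFunc.X⁻¹


namespace YPartition

def len (lam : YPartition) : ℕ := lam.parts.length
def part (lam : YPartition) (i : ℕ) : ℕ := lam.parts.getD i 0

lemma part_pos (lam : YPartition) {i : ℕ} (hi : i < lam.len) : 0 < lam.part i := by
  rw [part, List.getD_eq_getElem _ _ hi]
  exact lam.pos _ (lam.parts.getElem_mem hi)

lemma part_antitone (lam : YPartition) {i j : ℕ} (hij : i ≤ j) (hj : j < lam.len) :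
    lam.part j ≤ lam.part i := by
  have hi : i < lam.len := lt_of_le_of_lt hij hj
  rw [part, part, List.getD_eq_getElem _ _ hi, List.getD_eq_getElem _ _ hj]
  rcases eq_or_lt_of_le hij with rfl | hlt
  · rfl
  · exact lam.sorted.rel_get_of_lt hlt

def memY (lam : YPartition) (i j : ℕ) : Prop := i < lam.len ∧ j < lam.part i

def rowSet (lam : YPartition) (m : ℤ) : Finset ℕ :=
  (Finset.range lam.len).filter (fun i => 0 ≤ m + i ∧ (m + i).toNat < lam.part i)

def dval (lam : YPartition) (m : ℤ) : ℕ := (lam.rowSet m).card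

lemma rowSet_ge {lam : YPartition} {m : ℤ} {i : ℕ} (hi : i ∈ lam.rowSet m) :
    (-m).toNat ≤ i := by
  obtain ⟨-, h0, -⟩ := Finset.mem_filter.mp hi
  omega

lemma rowSet_lower {lam : YPartition} {m : ℤ} {i i' : ℕ} (hi : i ∈ lam.rowSet m)
    (hb : (-m).toNat ≤ i') (hle : i' ≤ i) : i' ∈ lam.rowSet m := by
  have hmf := Finset.mem_filter.mp hi
  have hrange := Finset.mem_range.mp hmf.1
  have h0 := hmf.2.1
  have hlt := hmf.2.2
  refine Finset.mem_filter.mpr ⟨Finset.mem_range.mpr (by omega), by omega, ?_⟩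
  have h1 : lam.part i ≤ lam.part i' := lam.part_antitone hle (by omega)
  omega

lemma rowSet_char (lam : YPartition) (m : ℤ) (t : ℕ) :
    t + (-m).toNat ∈ lam.rowSet m ↔ t < lam.dval m := by
  constructor
  · intro h
    have hsub : (Finset.range (t + 1)).image (· + (-m).toNat) ⊆ lam.rowSet m := by
      intro x hx
      obtain ⟨u, hu, rfl⟩ := Finset.mem_image.mp hx
      have hu' : u ≤ t := by simpa [Nat.lt_succ_iff] using hu
      exact rowSet_lower h (Nat.le_add_left _ _) (by omega)
    have := Finset.card_le_card hsub
    rw [Finset.card_image_of_injective _ (add_left_injective _), Finset.card_range] at this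
    exact this
  · intro h
    by_contra hmem
    have hsub : lam.rowSet m ⊆ (Finset.range t).image (· + (-m).toNat) := by
      intro x hx
      have hbx : (-m).toNat ≤ x := rowSet_ge hx
      have hxlt : x < t + (-m).toNat := by
        by_contra hge
        exact hmem (rowSet_lower hx (Nat.le_add_left _ _) (by omega))
      exact Finset.mem_image.mpr ⟨x - (-m).toNat, Finset.mem_range.mpr (by omega), by omega⟩
    have hc := Finset.card_le_card hsub
    rw [Finset.card_image_of_injective _ (add_left_injective _), Finset.card_range] at hc
    rw [dval] at h
    omega

lemma memY_iff_rowSet (lam : YPartition) (i j : ℕ) :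
    lam.memY i j ↔ i ∈ lam.rowSet ((j : ℤ) - i) := by
  unfold memY rowSet
  rw [Finset.mem_filter, Finset.mem_range]
  constructor
  · rintro ⟨h1, h2⟩
    exact ⟨h1, by omega, by omega⟩
  · rintro ⟨h1, h2, h3⟩
    exact ⟨h1, by omega⟩

lemma memY_iff_dval (lam : YPartition) (i j : ℕ) :
    lam.memY i j ↔ min i j < lam.dval ((j : ℤ) - i) := by
  rw [memY_iff_rowSet]
  have hb : i = min i j + (-(((j : ℤ) - i))).toNat := by omega
  rw [← rowSet_char lam ((j : ℤ) - i) (min i j), ← hb]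

/-- the partition is determined by `dval` -/
lemma eq_of_dval_eq {lam mu : YPartition} (h : ∀ m : ℤ, lam.dval m = mu.dval m) :
    lam = mu := by
  have hmem : ∀ i j, lam.memY i j ↔ mu.memY i j := by
    intro i j
    rw [memY_iff_dval, memY_iff_dval, h]
  have hlen : lam.len = mu.len := by
    have h0 : ∀ i, i < lam.len ↔ i < mu.len := by
      intro i
      constructor
      · intro hi
        exact ((hmem i 0).mp ⟨hi, lam.part_pos hi⟩).1
      · intro hi
        exact ((hmem i 0).mpr ⟨hi, mu.part_pos hi⟩).1
    have := h0 lam.len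
    have := h0 mu.len
    omega
  have hpart : ∀ i, i < lam.len → lam.part i = mu.part i := by
    intro i hi
    have h0 : ∀ j, j < lam.part i ↔ j < mu.part i := by
      intro j
      constructor
      · intro hj; exact ((hmem i j).mp ⟨hi, hj⟩).2
      · intro hj; exact ((hmem i j).mpr ⟨hlen ▸ hi, hj⟩).2
    have := h0 (lam.part i)
    have := h0 (mu.part i)
    omega
  have : lam.parts = mu.parts := by
    apply List.ext_getElem hlen
    intro i h1 h2
    have := hpart i h1
    rw [part, part, List.getD_eq_getElem _ _ h1, List.getD_eq_getElem _ _ h2] at this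
    simpa using this
  obtain ⟨p1, _, _⟩ := lam
  obtain ⟨p2, _, _⟩ := mu
  simp only [mk.injEq]
  exact this




noncomputable def polyF (lam : YPartition) (M : ℕ) : Polynomial ℚ :=
  ∑ i ∈ Finset.range lam.len, ∑ j ∈ Finset.range (lam.part i),
    Polynomial.X ^ (2 * (j + (M - i)))

lemma contentEval_eq (lam : YPartition) :
    contentEval lam = ∑ i ∈ Finset.range lam.len, ∑ j ∈ Finset.range (lam.part i),
      (RatFunc.X : RatFunc ℚ) ^ (2 * ((j : ℤ) - (i : ℤ))) := rfl

lemma algebraMap_polyF (lam : YPartition) (M : ℕ) (hM : lam.len ≤ M) :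
    algebraMap (Polynomial ℚ) (RatFunc ℚ) (lam.polyF M)
      = (RatFunc.X : RatFunc ℚ) ^ ((2 * M : ℕ) : ℤ) * contentEval lam := by
  rw [contentEval_eq, polyF, map_sum, Finset.mul_sum]
  apply Finset.sum_congr rfl
  intro i hi
  rw [map_sum, Finset.mul_sum]
  apply Finset.sum_congr rfl
  intro j hj
  have hiM : i ≤ M := le_trans (le_of_lt (Finset.mem_range.mp hi)) hM
  rw [map_pow, RatFunc.algebraMap_X]
  rw [← zpow_natCast (RatFunc.X : RatFunc ℚ) (2 * (j + (M - i))),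
    ← zpow_add₀ (RatFunc.X_ne_zero (K := ℚ))]
  congr 1
  push_cast [Nat.cast_sub hiM]
  ring

/-- the box-count of exponent `2*u` -/
def cnt (lam : YPartition) (M u : ℕ) : ℕ :=
  ∑ i ∈ Finset.range lam.len,
    ((Finset.range (lam.part i)).filter (fun j => 2 * (j + (M - i)) = 2 * u)).card

lemma coeff_polyF (lam : YPartition) (M u : ℕ) :
    (lam.polyF M).coeff (2 * u) = (lam.cnt M u : ℚ) := by
  rw [polyF, cnt]
  rw [Polynomial.finset_sum_coeff]
  push_cast
  apply Finset.sum_congr rfl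
  intro i _
  rw [Polynomial.finset_sum_coeff]
  rw [Finset.card_filter]
  push_cast
  apply Finset.sum_congr rfl
  intro j _
  rw [Polynomial.coeff_X_pow]
  split_ifs with h1 h2 <;> first | rfl | omega

lemma cnt_eq_dval (lam : YPartition) (M u : ℕ) (hM : lam.len ≤ M) :
    lam.cnt M u = lam.dval ((u : ℤ) - M) := by
  rw [cnt, dval, rowSet, Finset.card_filter]
  apply Finset.sum_congr rfl
  intro i hi
  have hiM : i ≤ M := le_trans (le_of_lt (Finset.mem_range.mp hi)) hM
  by_cases hc : 0 ≤ (u : ℤ) - M + i ∧ ((u : ℤ) - M + i).toNat < lam.part i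
  · rw [if_pos hc]
    have : (Finset.range (lam.part i)).filter (fun j => 2 * (j + (M - i)) = 2 * u)
        = {((u : ℤ) - M + i).toNat} := by
      apply Finset.eq_singleton_iff_unique_mem.mpr
      refine ⟨Finset.mem_filter.mpr ⟨Finset.mem_range.mpr hc.2, by omega⟩, ?_⟩
      intro j hj
      have h1 := Finset.mem_filter.mp hj
      omega
    rw [this, Finset.card_singleton]
  · rw [if_neg hc]
    have : (Finset.range (lam.part i)).filter (fun j => 2 * (j + (M - i)) = 2 * u) = ∅ := by
      apply Finset.filter_false_of_mem
      intro j hj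
      have := Finset.mem_range.mp hj
      omega
    rw [this, Finset.card_empty]

lemma dval_eq_zero_of_lt (lam : YPartition) (m : ℤ) (hm : m < -(lam.len : ℤ)) :
    lam.dval m = 0 := by
  rw [dval, Finset.card_eq_zero]
  apply Finset.filter_false_of_mem
  intro i hi
  have := Finset.mem_range.mp hi
  intro hc
  omega

lemma contentEval_injective : Function.Injective contentEval := by
  intro lam mu h
  set M := max lam.len mu.len with hMdef
  have h1 : lam.len ≤ M := le_max_left _ _
  have h2 : mu.len ≤ M := le_max_right _ _
  have hpoly : lam.polyF M = mu.polyF M := by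
    apply RatFunc.algebraMap_injective ℚ
    rw [algebraMap_polyF lam M h1, algebraMap_polyF mu M h2, h]
  apply eq_of_dval_eq
  intro m
  by_cases hm : -(M : ℤ) ≤ m
  · have hu : ((m + M).toNat : ℤ) - M = m := by omega
    have := congrArg (fun p => Polynomial.coeff p (2 * (m + M).toNat)) hpoly
    simp only [coeff_polyF] at this
    have hcnt : lam.cnt M (m + M).toNat = mu.cnt M (m + M).toNat := by
      exact_mod_cast this
    rw [cnt_eq_dval lam _ _ h1, cnt_eq_dval mu _ _ h2, hu] at hcnt
    exact hcnt
  · rw [dval_eq_zero_of_lt lam m (by omega), dval_eq_zero_of_lt mu m (by omega)]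


end YPartition


lemma ratX_ne_zero : (RatFunc.X : RatFunc ℚ) ≠ 0 := RatFunc.X_ne_zero

lemma zRF_ne_zero : zRF ≠ 0 := by
  intro h
  have hx : (RatFunc.X : RatFunc ℚ) * zRF = RatFunc.X ^ 2 - 1 := by
    unfold zRF
    field_simp [ratX_ne_zero]
  rw [h, mul_zero] at hx
  have h2 : (RatFunc.X : RatFunc ℚ) ^ 2 = 1 := by linear_combination -hx
  have : (Polynomial.X : Polynomial ℚ) ^ 2 = 1 := by
    apply RatFunc.algebraMap_injective ℚ
    simpa [map_pow, RatFunc.algebraMap_X] using h2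
  simpa using congrArg (Polynomial.coeff · 0) this

/-- power sums vanishing implies coefficients vanish -/
lemma powsum_zero {K : Type*} [Field K] (S : Finset K) :
    ∀ g : K → K, (∀ k : ℕ, ∑ x ∈ S, g x * x ^ k = 0) → ∀ x ∈ S, g x = 0 := by
  classical
  induction S using Finset.induction_on with
  | empty => intro g _ x hx; simp at hx
  | @insert x₀ S' hx₀ IH =>
    intro g hg x hx
    have key : ∀ y ∈ S', g y = 0 := by
      intro y hy
      have h1 := IH (fun y => g y * (y - x₀)) ?_ y hy
      · rcases mul_eq_zero.mp h1 with h | h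
        · exact h
        · exact absurd (sub_eq_zero.mp h ▸ hy) hx₀
      · intro k
        have e1 := hg (k + 1)
        have e2 := hg k
        have : ∑ y ∈ insert x₀ S', g y * (y - x₀) * y ^ k = 0 := by
          have : ∑ y ∈ insert x₀ S', g y * (y - x₀) * y ^ k
              = (∑ y ∈ insert x₀ S', g y * y ^ (k+1)) - x₀ * ∑ y ∈ insert x₀ S', g y * y ^ k := by
            rw [Finset.mul_sum, ← Finset.sum_sub_distrib]
            apply Finset.sum_congr rfl
            intro y _; ring
          rw [this, e1, e2]; ring
        rw [Finset.sum_insert hx₀] at this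
        simpa using this
    rcases Finset.mem_insert.mp hx with rfl | hxS
    · have := hg 0
      rw [Finset.sum_insert hx₀] at this
      simp only [pow_zero, mul_one] at this
      have : g x + ∑ y ∈ S', g y = 0 := this
      rwa [Finset.sum_eq_zero key, add_zero] at this
    · exact key x hxS


lemma powsum2_zero {K : Type*} [Field K] {ι : Type*} (T : Finset ι) (A B : ι → K)
    (hinj : ∀ p ∈ T, ∀ q ∈ T, A p = A q → B p = B q → p = q) (v : ι → K)
    (h : ∀ k l : ℕ, ∑ p ∈ T, v p * A p ^ k * B p ^ l = 0) :
    ∀ p ∈ T, v p = 0 := by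
  classical
  intro p hp
  -- first elimination: for each l, the fiber sums over A vanish
  have step1 : ∀ l : ℕ, ∑ q ∈ T.filter (fun q => A q = A p), v q * B q ^ l = 0 := by
    intro l
    have hfib : ∀ k : ℕ,
        ∑ x ∈ T.image A, (∑ q ∈ T.filter (fun q => A q = x), v q * B q ^ l) * x ^ k = 0 := by
      intro k
      calc ∑ x ∈ T.image A, (∑ q ∈ T.filter (fun q => A q = x), v q * B q ^ l) * x ^ k
          = ∑ x ∈ T.image A, ∑ q ∈ T.filter (fun q => A q = x), v q * A q ^ k * B q ^ l := by
            apply Finset.sum_congr rfl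
            intro x _
            rw [Finset.sum_mul]
            apply Finset.sum_congr rfl
            intro q hq
            have : A q = x := (Finset.mem_filter.mp hq).2
            rw [this]; ring
        _ = ∑ q ∈ T, v q * A q ^ k * B q ^ l :=
            Finset.sum_fiberwise_of_maps_to (fun x hx => Finset.mem_image_of_mem A hx) _
        _ = 0 := h k l
    exact powsum_zero (T.image A) _ hfib (A p) (Finset.mem_image_of_mem A hp)
  -- second elimination
  set T1 := T.filter (fun q => A q = A p) with hT1
  have hp1 : p ∈ T1 := Finset.mem_filter.mpr ⟨hp, rfl⟩
  have step2 : ∀ l : ℕ,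
      ∑ y ∈ T1.image B, (∑ q ∈ T1.filter (fun q => B q = y), v q) * y ^ l = 0 := by
    intro l
    calc ∑ y ∈ T1.image B, (∑ q ∈ T1.filter (fun q => B q = y), v q) * y ^ l
        = ∑ y ∈ T1.image B, ∑ q ∈ T1.filter (fun q => B q = y), v q * B q ^ l := by
          apply Finset.sum_congr rfl
          intro y _
          rw [Finset.sum_mul]
          apply Finset.sum_congr rfl
          intro q hq
          have : B q = y := (Finset.mem_filter.mp hq).2
          rw [this]
      _ = ∑ q ∈ T1, v q * B q ^ l :=
          Finset.sum_fiberwise_of_maps_to (fun x hx => Finset.mem_image_of_mem B hx) _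
      _ = 0 := step1 l
  have h2 := powsum_zero (T1.image B) _ step2 (B p) (Finset.mem_image_of_mem B hp1)
  have hsingle : T1.filter (fun q => B q = B p) = {p} := by
    apply Finset.eq_singleton_iff_unique_mem.mpr
    constructor
    · exact Finset.mem_filter.mpr ⟨hp1, rfl⟩
    · intro q hq
      obtain ⟨hq1, hqB⟩ := Finset.mem_filter.mp hq
      obtain ⟨hqT, hqA⟩ := Finset.mem_filter.mp hq1
      exact hinj q hqT p hp hqA hqB
  rw [hsingle] at h2
  simpa using h2


lemma contentEval_empty : contentEval YPartition.empty = 0 := by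
  simp [contentEval, YPartition.empty]

lemma aval_injective :
    Function.Injective (fun lam => zRF * contentEval lam + zRF⁻¹) := by
  intro lam mu h
  simp only [add_left_inj] at h
  exact YPartition.contentEval_injective (mul_left_cancel₀ zRF_ne_zero h)

/-- Suppose `w` is a finitely supported function from ordered pairs of partitions to
`ℚ(s)` and `r ∈ ℚ(s)` satisfy, for all `k, l ≥ 0`,
`Σ_{(λ,μ)} w(λ,μ) · (z C_λ(s²) + z⁻¹)^k · (z C_μ(s²) + z⁻¹)^l = z^(−k−l) · r`.
Then `w(∅, ∅) = r` and `w(λ, μ) = 0` for `(λ, μ) ≠ (∅, ∅)`. -/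
theorem unique_solution_of_eigenvalue_system
    (w : (YPartition × YPartition) →₀ RatFunc ℚ) (r : RatFunc ℚ)
    (h : ∀ k l : ℕ,
      (w.sum fun p c =>
        c * (zRF * contentEval p.1 + zRF⁻¹) ^ k * (zRF * contentEval p.2 + zRF⁻¹) ^ l)
        = zRF ^ (-(k : ℤ) - (l : ℤ)) * r) :
    w (YPartition.empty, YPartition.empty) = r ∧
      ∀ p : YPartition × YPartition, p ≠ (YPartition.empty, YPartition.empty) → w p = 0 := by
  classical
  set e : YPartition × YPartition := (YPartition.empty, YPartition.empty) with he
  set aval : YPartition → RatFunc ℚ := fun lam => zRF * contentEval lam + zRF⁻¹ with ha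
  have hae : aval YPartition.empty = zRF⁻¹ := by
    rw [ha]; simp [contentEval_empty]
  have hzinv : ∀ k l : ℕ, zRF ^ (-(k : ℤ) - (l : ℤ)) = zRF⁻¹ ^ k * zRF⁻¹ ^ l := by
    intro k l
    rw [inv_pow, inv_pow, ← mul_inv, ← pow_add, ← zpow_natCast zRF (k + l), ← zpow_neg]
    congr 1; push_cast; ring
  set T : Finset (YPartition × YPartition) := insert e w.support with hT
  set v : YPartition × YPartition → RatFunc ℚ := fun p => w p - if p = e then r else 0 with hv
  have hsum : ∀ k l : ℕ, ∑ p ∈ T, v p * aval p.1 ^ k * aval p.2 ^ l = 0 := by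
    intro k l
    have hw : ∑ p ∈ T, w p * aval p.1 ^ k * aval p.2 ^ l
        = zRF ^ (-(k : ℤ) - (l : ℤ)) * r := by
      rw [← h k l, Finsupp.sum]
      apply (Finset.sum_subset (Finset.subset_insert e w.support) ?_).symm
      intro p _ hp
      rw [Finsupp.notMem_support_iff.mp hp]; ring
    have hr : ∑ p ∈ T, (if p = e then r else 0) * aval p.1 ^ k * aval p.2 ^ l
        = zRF ^ (-(k : ℤ) - (l : ℤ)) * r := by
      rw [Finset.sum_eq_single_of_mem e (Finset.mem_insert_self e _)]
      · rw [if_pos rfl, hzinv k l]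
        have h1 : aval e.1 = zRF⁻¹ := hae
        have h2 : aval e.2 = zRF⁻¹ := hae
        rw [h1]; ring
      · intro p _ hp
        rw [if_neg hp]; ring
    calc ∑ p ∈ T, v p * aval p.1 ^ k * aval p.2 ^ l
        = (∑ p ∈ T, w p * aval p.1 ^ k * aval p.2 ^ l)
          - ∑ p ∈ T, (if p = e then r else 0) * aval p.1 ^ k * aval p.2 ^ l := by
          rw [← Finset.sum_sub_distrib]
          apply Finset.sum_congr rfl
          intro p _
          rw [hv]; ring
      _ = 0 := by rw [hw, hr, sub_self]
  have hinj : ∀ p ∈ T, ∀ q ∈ T, aval p.1 = aval q.1 → aval p.2 = aval q.2 → p = q := by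
    intro p _ q _ h1 h2
    exact Prod.ext (aval_injective h1) (aval_injective h2)
  have hvz := powsum2_zero T (fun p => aval p.1) (fun p => aval p.2) hinj v hsum
  constructor
  · have := hvz e (Finset.mem_insert_self e _)
    rw [hv] at this
    simp only [if_pos rfl] at this
    exact sub_eq_zero.mp this
  · intro p hp
    by_cases hpT : p ∈ T
    · have := hvz p hpT
      rw [hv] at this
      simp only [if_neg hp, sub_zero] at this
      exact this
    · have : p ∉ w.support := fun hc => hpT (Finset.mem_insert_of_mem hc)
      exact Finsupp.notMem_support_iff.mp this
end

section
/- Let λ = (λ₁, …, λ_ℓ) and μ = (μ₁, …, μ_k) be partitions, and let M_{λ,μ} be the (finite) set of ℓ × k matrices with nonnegative integer entries whose i-th row sums to λ_i and whose j-th column sums to μ_j. Define Laurent polynomials ⟨m⟩ ∈ ℤ[z, z⁻¹] by ⟨0⟩ = z⁻² and, for m ≥ 1, ⟨m⟩ = Σ_{j=0}^{m−1} C(m+j, 2j+1) z^{2j}, where C(·,·) is the binomial coefficient. Then the Laurent polynomial z^{2ℓk − ℓ − k} · Σ_{(b_{ij}) ∈ M_{λ,μ}} Π_{i,j} ⟨b_{ij}⟩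 contains no negative powers of z — indeed every monomial appearing in it has z-degree at least |ℓ − k| — and all of its coefficients are nonnegative integers. -/
/-- The Laurent polynomial `⟨m⟩ ∈ ℤ[z, z⁻¹]`: `⟨0⟩ = z⁻²` and, for `m ≥ 1`,
`⟨m⟩ = Σ_{j=0}^{m−1} C(m+j, 2j+1) z^(2j)`. -/
noncomputable def angleBracket (m : ℕ) : LaurentPolynomial ℤ :=
  if m = 0 then LaurentPolynomial.T (-2)
  else ∑ j ∈ Finset.range m,
    LaurentPolynomial.C (((m + j).choose (2 * j + 1) : ℤ)) *
      LaurentPolynomial.T (2 * (j : ℤ))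

/-- The combinatorial formula `z^(2ℓk − ℓ − k) · Σ_{(b_{ij}) ∈ M_{λ,μ}} Π_{i,j} ⟨b_{ij}⟩`
for the 2-graded ruling polynomial of `A_λ A_{−μ}`, where `M_{λ,μ}` is the (finite) set
of `ℓ × k` matrices of nonnegative integers whose `i`-th row sums to `λ_i` and whose
`j`-th column sums to `μ_j`. -/
noncomputable def rulingPoly (lam mu : YPartition) : LaurentPolynomial ℤ :=
  LaurentPolynomial.T
      (2 * (lam.parts.length : ℤ) * (mu.parts.length : ℤ)
        - (lam.parts.length : ℤ) - (mu.parts.length : ℤ)) *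
    ∑ᶠ B ∈ {B : Fin lam.parts.length → Fin mu.parts.length → ℕ |
        (∀ i, ∑ j, B i j = lam.parts.get i) ∧ (∀ j, ∑ i, B i j = mu.parts.get j)},
      ∏ i, ∏ j, angleBracket (B i j)


/-- `Good c P`: all coefficients of `P` nonneg and vanish below `c`. -/
def Good (c : ℤ) (P : LaurentPolynomial ℤ) : Prop :=
  ∀ n : ℤ, (n < c → P.coeff n = 0) ∧ 0 ≤ P.coeff n

lemma good_mono {c c' : ℤ} (h : c' ≤ c) {P : LaurentPolynomial ℤ} (hP : Good c P) :
    Good c' P := fun n => ⟨fun hn => (hP n).1 (lt_of_lt_of_le hn h), (hP n).2⟩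

lemma good_zero (c : ℤ) : Good c (0 : LaurentPolynomial ℤ) :=
  fun _ => ⟨fun _ => rfl, le_refl 0⟩

lemma good_add {c : ℤ} {P Q : LaurentPolynomial ℤ} (hP : Good c P) (hQ : Good c Q) :
    Good c (P + Q) := by
  intro n
  have h : (P + Q).coeff n = P.coeff n + Q.coeff n := by
    rw [AddMonoidAlgebra.coeff_add, Finsupp.add_apply]
  refine ⟨fun hn => ?_, ?_⟩
  · rw [h, (hP n).1 hn, (hQ n).1 hn, add_zero]
  · rw [h]; exact add_nonneg (hP n).2 (hQ n).2

lemma good_single {c n r : ℤ} (hr : 0 ≤ r) (hn : c ≤ n) :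
    Good c (AddMonoidAlgebra.single n r : LaurentPolynomial ℤ) := by
  intro m
  have h : (AddMonoidAlgebra.single n r : LaurentPolynomial ℤ).coeff m = if n = m then r else 0 := by
    rw [AddMonoidAlgebra.coeff_single, Finsupp.single_apply]
  refine ⟨fun hm => ?_, ?_⟩
  · rw [h, if_neg]; omega
  · rw [h]; split <;> simp [hr]

lemma good_one : Good 0 (1 : LaurentPolynomial ℤ) := by
  have : (1 : LaurentPolynomial ℤ) = AddMonoidAlgebra.single 0 1 := rfl
  rw [this]; exact good_single zero_le_one le_rfl

lemma good_mul {c d : ℤ} {P Q : LaurentPolynomial ℤ} (hP : Good c P) (hQ : Good d Q) :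
    Good (c + d) (P * Q) := by
  intro n
  classical
  have h : (P * Q).coeff n =
      ∑ a ∈ P.coeff.support, ∑ b ∈ Q.coeff.support, if a + b = n then P.coeff a * Q.coeff b else 0 := by
    rw [AddMonoidAlgebra.coeff_mul]; rfl
  refine ⟨fun hn => ?_, ?_⟩
  · rw [h]
    refine Finset.sum_eq_zero fun a _ => Finset.sum_eq_zero fun b _ => ?_
    split
    · rename_i hab
      rcases lt_or_ge a c with ha | ha
      · rw [(hP a).1 ha, zero_mul]
      · have hb : b < d := by omega
        rw [(hQ b).1 hb, mul_zero]
    · rfl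
  · rw [h]
    refine Finset.sum_nonneg fun a _ => Finset.sum_nonneg fun b _ => ?_
    split
    · exact mul_nonneg (hP a).2 (hQ b).2
    · exact le_refl 0

lemma good_sum {ι : Type*} (s : Finset ι) (c : ℤ) (P : ι → LaurentPolynomial ℤ)
    (h : ∀ i ∈ s, Good c (P i)) : Good c (∑ i ∈ s, P i) := by
  classical
  induction s using Finset.induction_on with
  | empty => simpa using good_zero c
  | insert _ _ ha ih =>
    rw [Finset.sum_insert ha]
    exact good_add (h _ (Finset.mem_insert_self _ _))
      (ih fun i hi => h i (Finset.mem_insert_of_mem hi))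

lemma good_prod {ι : Type*} (s : Finset ι) (c : ι → ℤ) (P : ι → LaurentPolynomial ℤ)
    (h : ∀ i ∈ s, Good (c i) (P i)) : Good (∑ i ∈ s, c i) (∏ i ∈ s, P i) := by
  classical
  induction s using Finset.induction_on with
  | empty => simpa using good_one
  | insert _ _ ha ih =>
    rw [Finset.sum_insert ha, Finset.prod_insert ha]
    exact good_mul (h _ (Finset.mem_insert_self _ _))
      (ih fun i hi => h i (Finset.mem_insert_of_mem hi))

lemma good_T (n : ℤ) : Good n (LaurentPolynomial.T n : LaurentPolynomial ℤ) :=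
  good_single zero_le_one le_rfl

lemma good_angleBracket' (m : ℕ) :
    Good (if m = 0 then (-2 : ℤ) else 0) (angleBracket m) := by
  unfold angleBracket
  split
  · exact good_T (-2)
  · refine good_sum _ _ _ fun j _ => ?_
    rw [← LaurentPolynomial.single_eq_C_mul_T]
    exact good_single (Int.ofNat_nonneg _) (by positivity)

lemma row_bound {k : ℕ} (f : Fin k → ℕ) (hf : ∑ j, f j ≠ 0) :
    -2 * (k : ℤ) + 2 ≤ ∑ j, (if f j = 0 then (-2 : ℤ) else 0) := by
  obtain ⟨j0, -, hj0⟩ := Finset.exists_ne_zero_of_sum_ne_zero hf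
  classical
  rw [← Finset.add_sum_erase _ _ (Finset.mem_univ j0), if_neg hj0, zero_add]
  have hcard : ((Finset.univ.erase j0).card : ℤ) = (k : ℤ) - 1 := by
    rw [Finset.card_erase_of_mem (Finset.mem_univ j0)]
    have hk : 0 < k := j0.pos
    simp only [Finset.card_univ, Fintype.card_fin]
    omega
  have h := Finset.card_nsmul_le_sum (Finset.univ.erase j0)
      (fun j => if f j = 0 then (-2 : ℤ) else 0) (-2)
      (fun x _ => by split <;> omega)
  rw [nsmul_eq_mul] at h
  rw [hcard] at h
  linarith

lemma good_term (lam mu : YPartition)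
    (B : Fin lam.parts.length → Fin mu.parts.length → ℕ)
    (h1 : ∀ i, ∑ j, B i j = lam.parts.get i)
    (h2 : ∀ j, ∑ i, B i j = mu.parts.get j) :
    Good (|(lam.parts.length : ℤ) - (mu.parts.length : ℤ)| -
        (2 * (lam.parts.length : ℤ) * (mu.parts.length : ℤ)
          - (lam.parts.length : ℤ) - (mu.parts.length : ℤ)))
      (∏ i, ∏ j, angleBracket (B i j)) := by
  classical
  have hg : Good (∑ i, ∑ j, (if B i j = 0 then (-2 : ℤ) else 0))
      (∏ i, ∏ j, angleBracket (B i j)) := by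
    refine good_prod _ _ _ fun i _ => good_prod _ _ _ fun j _ => ?_
    exact good_angleBracket' (B i j)
  refine good_mono ?_ hg
  set L : ℤ := (lam.parts.length : ℤ) with hL
  set K : ℤ := (mu.parts.length : ℤ) with hK
  have hrow : ∀ i, -2 * K + 2 ≤ ∑ j, (if B i j = 0 then (-2 : ℤ) else 0) := by
    intro i
    refine row_bound _ ?_
    rw [h1 i]
    exact (lam.pos _ (lam.parts.get_mem i)).ne'
  have hcol : ∀ j, -2 * L + 2 ≤ ∑ i, (if B i j = 0 then (-2 : ℤ) else 0) := by
    intro j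
    refine row_bound _ ?_
    rw [h2 j]
    exact (mu.pos _ (mu.parts.get_mem j)).ne'
  have hR : L * (-2 * K + 2) ≤ ∑ i, ∑ j, (if B i j = 0 then (-2 : ℤ) else 0) := by
    calc L * (-2 * K + 2) = ∑ _i : Fin lam.parts.length, (-2 * K + 2) := by
          rw [Finset.sum_const, nsmul_eq_mul, Finset.card_univ, Fintype.card_fin]
      _ ≤ _ := Finset.sum_le_sum fun i _ => hrow i
  have hC : K * (-2 * L + 2) ≤ ∑ i, ∑ j, (if B i j = 0 then (-2 : ℤ) else 0) := by
    rw [Finset.sum_comm]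
    calc K * (-2 * L + 2) = ∑ _j : Fin mu.parts.length, (-2 * L + 2) := by
          rw [Finset.sum_const, nsmul_eq_mul, Finset.card_univ, Fintype.card_fin]
      _ ≤ _ := Finset.sum_le_sum fun j _ => hcol j
  rcases abs_cases (L - K) with ⟨habs, hle⟩ | ⟨habs, hle⟩ <;> rw [habs] <;> nlinarith

lemma set_finite (lam mu : YPartition) :
    {B : Fin lam.parts.length → Fin mu.parts.length → ℕ |
        (∀ i, ∑ j, B i j = lam.parts.get i) ∧
        (∀ j, ∑ i, B i j = mu.parts.get j)}.Finite := by
  classical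
  have hT : {B : Fin lam.parts.length → Fin mu.parts.length → ℕ |
      ∀ i, B i ∈ {g : Fin mu.parts.length → ℕ | ∀ j, g j ∈ Set.Iic lam.parts.sum}}.Finite :=
    Set.Finite.pi' fun _ => Set.Finite.pi' fun _ => Set.finite_Iic _
  refine hT.subset ?_
  rintro B ⟨hB1, -⟩ i j
  simp only [Set.mem_Iic]
  have h1 : B i j ≤ ∑ j', B i j' :=
    Finset.single_le_sum (fun _ _ => Nat.zero_le _) (Finset.mem_univ j)
  rw [hB1 i] at h1
  exact h1.trans (List.le_sum_of_mem (lam.parts.get_mem i))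

/-- The ruling polynomial `R²_{A_λ A_{−μ}}(z)` contains no negative powers of `z`:
every monomial appearing in it has `z`-degree at least `|ℓ − k|`, and all of its
coefficients are nonnegative integers. -/
theorem rulingPoly_coeff_nonneg_and_low_degree_vanish (lam mu : YPartition) :
    (∀ m : ℤ, m < |(lam.parts.length : ℤ) - (mu.parts.length : ℤ)| →
      (rulingPoly lam mu).coeff m = 0) ∧
    (∀ m : ℤ, 0 ≤ (rulingPoly lam mu).coeff m) := by
  classical
  have hfin := set_finite lam mu
  have hfin' : ({B : Fin lam.parts.length → Fin mu.parts.length → ℕ |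
        (∀ i, ∑ j, B i j = lam.parts.get i) ∧ (∀ j, ∑ i, B i j = mu.parts.get j)} ∩
      Function.support fun B => ∏ i, ∏ j, angleBracket (B i j)).Finite :=
    hfin.inter_of_left _
  have hgood : Good (|(lam.parts.length : ℤ) - (mu.parts.length : ℤ)|)
      (rulingPoly lam mu) := by
    unfold rulingPoly
    rw [finsum_mem_eq_sum _ hfin']
    have hsum : Good (|(lam.parts.length : ℤ) - (mu.parts.length : ℤ)| -
        (2 * (lam.parts.length : ℤ) * (mu.parts.length : ℤ)
          - (lam.parts.length : ℤ) - (mu.parts.length : ℤ)))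
        (∑ B ∈ hfin'.toFinset, ∏ i, ∏ j, angleBracket (B i j)) := by
      refine good_sum _ _ _ fun B hB => ?_
      rw [Set.Finite.mem_toFinset] at hB
      exact good_term lam mu B hB.1.1 hB.1.2
    have := good_mul (good_T (2 * (lam.parts.length : ℤ) * (mu.parts.length : ℤ)
        - (lam.parts.length : ℤ) - (mu.parts.length : ℤ))) hsum
    have harith : 2 * (lam.parts.length : ℤ) * (mu.parts.length : ℤ)
        - (lam.parts.length : ℤ) - (mu.parts.length : ℤ) +
        (|(lam.parts.length : ℤ) - (mu.parts.length : ℤ)| -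
          (2 * (lam.parts.length : ℤ) * (mu.parts.length : ℤ)
            - (lam.parts.length : ℤ) - (mu.parts.length : ℤ))) =
        |(lam.parts.length : ℤ) - (mu.parts.length : ℤ)| := by ring
    rw [harith] at this
    exact this
  exact ⟨fun m hm => (hgood m).1 hm, fun m => (hgood m).2⟩
end
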